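/- Let R = k[t₁,t₂]/(t₁² − t₂², t₁t₂) and let L be the free rank-one R-module R with α acting as multiplication by t₁ and δ acting as multiplication by t₂. Then: (i) αδ = δα = 0 and α² = δ² in R, so L is an R ⊗_k Λ₁-module, free over R; (ii) L/(t₁,t₂)L is isomorphic to the simple Λ₁-module S₁ (the one-dimensional module with α = δ = 0); (iii) L/t₁L is isomorphic as a Λ₁-module to M(δ) and L/t₂L is isomorphic as a Λ₁-module to M(α), and M(α) and M(δ) are not isomorphic; here M(α) is the Λ₁-module k² with α(x,y) = (0,x) and δ = 0, and M(δ) is the Λ₁-module k² with δ(x,y) = (0,x) and α = 0. -/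

import Mathlib

set_option synthInstance.maxHeartbeats 1000000
set_option maxHeartbeats 1000000

/-! Common framework: modules over the generalized Brauer star algebra with one
edge, `Λ₁ = k⟨α,δ⟩/(αδ, δα, α² − δ²)`, encoded as a module `V` together with two
endomorphisms `A` (the action of `α`) and `D` (the action of `δ`). -/

namespace GBTAone

structure Mod1 (R : Type) [CommRing R] : Type 1 where
  V : Type
  [instAdd : AddCommGroup V]
  [instMod : Module R V]
  A : Module.End R V
  D : Module.End R V

attribute [instance] Mod1.instAdd Mod1.instMod

variable {R : Type} [CommRing R]

/-- The defining relations of `Λ₁`: `αδ = δα = 0` and `α² = δ²`. -/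
def Satisfies1 (ρ : Mod1 R) : Prop :=
  ρ.A * ρ.D = 0 ∧ ρ.D * ρ.A = 0 ∧ ρ.A * ρ.A = ρ.D * ρ.D

/-- The space of `Λ₁`-module homomorphisms `ρ → σ`. -/
def homSet1 (ρ σ : Mod1 R) : Submodule R (ρ.V →ₗ[R] σ.V) where
  carrier := {f | f ∘ₗ ρ.A = σ.A ∘ₗ f ∧ f ∘ₗ ρ.D = σ.D ∘ₗ f}
  add_mem' := by
    rintro f g ⟨hfa, hfd⟩ ⟨hga, hgd⟩
    exact ⟨by simp only [LinearMap.add_comp, LinearMap.comp_add, hfa, hga],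
      by simp only [LinearMap.add_comp, LinearMap.comp_add, hfd, hgd]⟩
  zero_mem' := ⟨by simp, by simp⟩
  smul_mem' := by
    rintro c f ⟨hfa, hfd⟩
    exact ⟨by simp only [LinearMap.smul_comp, LinearMap.comp_smul, hfa],
      by simp only [LinearMap.smul_comp, LinearMap.comp_smul, hfd]⟩

/-- Projectivity of a `Λ₁`-module, via the lifting property in the category of
`Λ₁`-modules. -/
def IsProjective1 (P : Mod1 R) : Prop :=
  Satisfies1 P ∧
  ∀ (A B : Mod1 R), Satisfies1 A → Satisfies1 B →
    ∀ p ∈ homSet1 A B, Function.Surjective p →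
      ∀ g ∈ homSet1 P B, ∃ h ∈ homSet1 P A, p ∘ₗ h = g

/-- An endomorphism `f` of `ρ` factors through a projective `Λ₁`-module. -/
def FactorsThroughProjective1 (ρ : Mod1 R) (f : ρ.V →ₗ[R] ρ.V) : Prop :=
  ∃ P : Mod1 R, IsProjective1 P ∧ ∃ g ∈ homSet1 ρ P, ∃ h ∈ homSet1 P ρ, f = h ∘ₗ g

/-- "The stable endomorphism ring of `ρ` is isomorphic to the scalars". -/
def StableEndIsoScalars1 (ρ : Mod1 R) : Prop :=
  (¬ FactorsThroughProjective1 ρ LinearMap.id) ∧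
  ∀ f ∈ homSet1 ρ ρ, ∃ c : R, FactorsThroughProjective1 ρ (f - c • LinearMap.id)

/-- The linear map on `Fin m → W` sending the `src` coordinate to the `dst`
coordinate through `g`, and killing all other coordinates. -/
def mk1 {m : ℕ} {W : Type} [AddCommGroup W] [Module R W] (src dst : Fin m)
    (g : W →ₗ[R] W) : (Fin m → W) →ₗ[R] (Fin m → W) where
  toFun x := fun r => if r = dst then g (x src) else 0
  map_add' x y := by funext r; by_cases h : r = dst <;> simp [h]
  map_smul' c x := by funext r; by_cases h : r = dst <;> simp [h]

/-- The map `(x, y) ↦ (0, x)` on `W × W`. -/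
def sh (R W : Type) [CommRing R] [AddCommGroup W] [Module R W] :
    (W × W) →ₗ[R] (W × W) :=
  LinearMap.prod 0 (LinearMap.fst R W W)

/-- The module `M(α)`: `k²` with `α(x,y) = (0,x)` and `δ = 0`. -/
@[reducible] def Malpha (k : Type) [CommRing k] : Mod1 k where
  V := k × k
  A := sh k k
  D := 0

/-- The module `M(δ)`: `k²` with `δ(x,y) = (0,x)` and `α = 0`. -/
@[reducible] def Mdelta (k : Type) [CommRing k] : Mod1 k where
  V := k × k
  A := 0
  D := sh k k

/-- The regular module `Λ₁`, with basis `1, α, δ, α²` (coordinates `0,1,2,3`). -/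
@[reducible] def reg (k : Type) [CommRing k] : Mod1 k where
  V := Fin 4 → k
  A := mk1 0 1 LinearMap.id + mk1 1 3 LinearMap.id
  D := mk1 0 2 LinearMap.id + mk1 2 3 LinearMap.id

/-- The simple `Λ₁`-module `S₁`. -/
@[reducible] def S1 (k : Type) [CommRing k] : Mod1 k where
  V := k
  A := 0
  D := 0


/-- The ideal `(t₁² − t₂², t₁t₂)` of `k[t₁,t₂]`. -/
noncomputable def I18 (k : Type) [Field k] : Ideal (MvPolynomial (Fin 2) k) :=
  Ideal.span {(MvPolynomial.X 0 : MvPolynomial (Fin 2) k) ^ 2 - MvPolynomial.X 1 ^ 2,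
    (MvPolynomial.X 0 : MvPolynomial (Fin 2) k) * MvPolynomial.X 1}

/-- `R = k[t₁,t₂]/(t₁² − t₂², t₁t₂)`. -/
noncomputable abbrev R18 (k : Type) [Field k] : Type :=
  MvPolynomial (Fin 2) k ⧸ I18 k

/-- The class of `t₁` in `R`. -/
noncomputable def t1 (k : Type) [Field k] : R18 k :=
  Ideal.Quotient.mk (I18 k) (MvPolynomial.X 0)

/-- The class of `t₂` in `R`. -/
noncomputable def t2 (k : Type) [Field k] : R18 k :=
  Ideal.Quotient.mk (I18 k) (MvPolynomial.X 1)

/-- The free rank-one `R`-module `L = R` with `α` acting as multiplication by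
`t₁` and `δ` as multiplication by `t₂`. -/
@[reducible] noncomputable def L18 (k : Type) [Field k] : Mod1 (R18 k) where
  V := R18 k
  A := t1 k • 1
  D := t2 k • 1



/-! ### Auxiliary machinery for the proof -/

section Aux

open MvPolynomial

variable {k : Type} [Field k]

private lemma t_mul : t1 k * t2 k = 0 := by
  rw [t1, t2, ← map_mul, Ideal.Quotient.eq_zero_iff_mem]
  exact Ideal.subset_span (by simp [I18])

private lemma t_sq : t1 k ^ 2 = t2 k ^ 2 := by
  rw [t1, t2, ← map_pow, ← map_pow, ← sub_eq_zero, ← map_sub, Ideal.Quotient.eq_zero_iff_mem]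
  exact Ideal.subset_span (by simp [I18])

private lemma decomp18 (i j : Fin 2) (hij : ∀ n : Fin 2, n = i ∨ n = j)
    (p : MvPolynomial (Fin 2) k) :
    ∃ q ∈ Ideal.span {(X i : MvPolynomial (Fin 2) k), (X j : MvPolynomial (Fin 2) k) ^ 2},
      ∃ a b : k, p = q + C a + C b * X j := by
  induction p using MvPolynomial.induction_on with
  | C a => exact ⟨0, Ideal.zero_mem _, a, 0, by simp⟩
  | add p q hp hq =>
    obtain ⟨q1, hq1, a1, b1, rfl⟩ := hp
    obtain ⟨q2, hq2, a2, b2, rfl⟩ := hq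
    exact ⟨q1 + q2, Ideal.add_mem _ hq1 hq2, a1 + a2, b1 + b2, by rw [map_add, map_add]; ring⟩
  | mul_X p n hp =>
    obtain ⟨q, hq, a, b, rfl⟩ := hp
    rcases hij n with rfl | rfl
    · refine ⟨(q + C a + C b * X j) * X n, Ideal.mul_mem_left _ _
        (Ideal.subset_span (by simp)), 0, 0, by simp only [map_zero]; ring⟩
    · refine ⟨q * X n + C b * X n ^ 2, ?_, 0, a, by simp only [map_zero]; ring⟩
      exact Ideal.add_mem _ (Ideal.mul_mem_right _ _ hq)
        (Ideal.mul_mem_left _ _ (Ideal.subset_span (by simp)))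

/-- Evaluation at `(0, ε)`. -/
private noncomputable def Phi1 : MvPolynomial (Fin 2) k →ₐ[k] DualNumber k :=
  MvPolynomial.aeval ![0, DualNumber.eps]

/-- Evaluation at `(ε, 0)`. -/
private noncomputable def Phi2 : MvPolynomial (Fin 2) k →ₐ[k] DualNumber k :=
  MvPolynomial.aeval ![DualNumber.eps, 0]

private lemma Phi1_ker : ∀ a ∈ I18 k, Phi1 (k := k) a = 0 := by
  have h : I18 k ≤ RingHom.ker (Phi1 (k := k)).toRingHom := by
    rw [I18, Ideal.span_le]
    rintro x (rfl | rfl) <;>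
      simp [SetLike.mem_coe, RingHom.mem_ker, Phi1, DualNumber.eps_mul_eps, sq]
  exact fun a ha => h ha

private lemma Phi2_ker : ∀ a ∈ I18 k, Phi2 (k := k) a = 0 := by
  have h : I18 k ≤ RingHom.ker (Phi2 (k := k)).toRingHom := by
    rw [I18, Ideal.span_le]
    rintro x (rfl | rfl) <;>
      simp [SetLike.mem_coe, RingHom.mem_ker, Phi2, DualNumber.eps_mul_eps, sq]
  exact fun a ha => h ha

private noncomputable def Psi1 : R18 k →+* DualNumber k :=
  Ideal.Quotient.lift (I18 k) (Phi1 (k := k)).toRingHom Phi1_ker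

private noncomputable def Psi2 : R18 k →+* DualNumber k :=
  Ideal.Quotient.lift (I18 k) (Phi2 (k := k)).toRingHom Phi2_ker

private def dnE : DualNumber k →+ k × k where
  toFun x := (x.fst, x.snd)
  map_zero' := by simp
  map_add' x y := by simp [Prod.ext_iff]

private lemma dnE_apply (x : DualNumber k) : dnE x = (x.fst, x.snd) := rfl

private lemma Psi1_t1 : Psi1 (t1 k) = 0 := by simp [Psi1, t1, Phi1]
private lemma Psi1_t2 : Psi1 (t2 k) = DualNumber.eps := by simp [Psi1, t2, Phi1]
private lemma Psi2_t1 : Psi2 (t1 k) = DualNumber.eps := by simp [Psi2, t1, Phi2]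
private lemma Psi2_t2 : Psi2 (t2 k) = 0 := by simp [Psi2, t2, Phi2]

private lemma dnE_eps_mul (w : DualNumber k) : dnE (DualNumber.eps * w) = (0, w.fst) := by
  simp [dnE_apply, TrivSqZeroExt.fst_mul, TrivSqZeroExt.snd_mul, Prod.ext_iff]

private lemma dnE_inl_mul (c : k) (w : DualNumber k) :
    dnE ((algebraMap k (DualNumber k) c) * w) = c • dnE w := by
  simp [dnE_apply, TrivSqZeroExt.fst_mul, TrivSqZeroExt.snd_mul, Prod.ext_iff,
    TrivSqZeroExt.algebraMap_eq_inl]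

private lemma algebraMap_R18 (c : k) :
    algebraMap k (R18 k) c = Ideal.Quotient.mk (I18 k) (C c) := rfl

private lemma Psi1_alg (c : k) :
    Psi1 (algebraMap k (R18 k) c) = algebraMap k (DualNumber k) c := by
  rw [algebraMap_R18]; simp [Psi1, Phi1]

private lemma Psi2_alg (c : k) :
    Psi2 (algebraMap k (R18 k) c) = algebraMap k (DualNumber k) c := by
  rw [algebraMap_R18]; simp [Psi2, Phi2]

private lemma Psi1_mk_lin (a b : k) :
    Psi1 (Ideal.Quotient.mk (I18 k) (C a + C b * X 1)) =
      algebraMap k (DualNumber k) a + algebraMap k (DualNumber k) b * DualNumber.eps := by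
  simp [Psi1, Phi1]

private lemma Psi2_mk_lin (a b : k) :
    Psi2 (Ideal.Quotient.mk (I18 k) (C a + C b * X 0)) =
      algebraMap k (DualNumber k) a + algebraMap k (DualNumber k) b * DualNumber.eps := by
  simp [Psi2, Phi2]

private lemma dnE_lin (a b : k) :
    dnE (algebraMap k (DualNumber k) a + algebraMap k (DualNumber k) b * DualNumber.eps) =
      (a, b) := by
  simp [dnE_apply, TrivSqZeroExt.fst_mul, TrivSqZeroExt.snd_mul, Prod.ext_iff,
    TrivSqZeroExt.algebraMap_eq_inl]

private lemma Phi1_span_ker :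
    ∀ q ∈ Ideal.span {(X 0 : MvPolynomial (Fin 2) k), (X 1 : MvPolynomial (Fin 2) k) ^ 2},
      Phi1 (k := k) q = 0 := by
  have h : Ideal.span {(X 0 : MvPolynomial (Fin 2) k), (X 1 : MvPolynomial (Fin 2) k) ^ 2}
      ≤ RingHom.ker (Phi1 (k := k)).toRingHom := by
    rw [Ideal.span_le]
    rintro x (rfl | rfl) <;>
      simp [SetLike.mem_coe, RingHom.mem_ker, Phi1, DualNumber.eps_mul_eps, sq]
  exact fun a ha => h ha

private lemma Phi2_span_ker :
    ∀ q ∈ Ideal.span {(X 1 : MvPolynomial (Fin 2) k), (X 0 : MvPolynomial (Fin 2) k) ^ 2},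
      Phi2 (k := k) q = 0 := by
  have h : Ideal.span {(X 1 : MvPolynomial (Fin 2) k), (X 0 : MvPolynomial (Fin 2) k) ^ 2}
      ≤ RingHom.ker (Phi2 (k := k)).toRingHom := by
    rw [Ideal.span_le]
    rintro x (rfl | rfl) <;>
      simp [SetLike.mem_coe, RingHom.mem_ker, Phi2, DualNumber.eps_mul_eps, sq]
  exact fun a ha => h ha

private lemma mk_span_t1 (q : MvPolynomial (Fin 2) k)
    (hq : q ∈ Ideal.span {(X 0 : MvPolynomial (Fin 2) k), (X 1 : MvPolynomial (Fin 2) k) ^ 2}) :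
    ∃ y, Ideal.Quotient.mk (I18 k) q = t1 k * y := by
  obtain ⟨c, d, rfl⟩ := Ideal.mem_span_pair.mp hq
  refine ⟨Ideal.Quotient.mk _ c + Ideal.Quotient.mk _ d * t1 k, ?_⟩
  have h2 : (Ideal.Quotient.mk (I18 k)) (X 1) ^ 2 = t1 k ^ 2 := by rw [← t2, ← t_sq]
  push_cast [map_add, map_mul, map_pow]
  rw [h2, ← t1]
  ring

private lemma mk_span_t2 (q : MvPolynomial (Fin 2) k)
    (hq : q ∈ Ideal.span {(X 1 : MvPolynomial (Fin 2) k), (X 0 : MvPolynomial (Fin 2) k) ^ 2}) :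
    ∃ y, Ideal.Quotient.mk (I18 k) q = t2 k * y := by
  obtain ⟨c, d, rfl⟩ := Ideal.mem_span_pair.mp hq
  refine ⟨Ideal.Quotient.mk _ c + Ideal.Quotient.mk _ d * t2 k, ?_⟩
  have h2 : (Ideal.Quotient.mk (I18 k)) (X 0) ^ 2 = t2 k ^ 2 := by rw [← t1, t_sq]
  push_cast [map_add, map_mul, map_pow]
  rw [h2, ← t2]
  ring

/-- Evaluation at `(0, 0)`. -/
private noncomputable def Phi0 : MvPolynomial (Fin 2) k →ₐ[k] k :=
  MvPolynomial.aeval 0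

private lemma Phi0_ker : ∀ a ∈ I18 k, Phi0 (k := k) a = 0 := by
  have h : I18 k ≤ RingHom.ker (Phi0 (k := k)).toRingHom := by
    rw [I18, Ideal.span_le]
    rintro x (rfl | rfl) <;> simp [SetLike.mem_coe, RingHom.mem_ker, Phi0]
  exact fun a ha => h ha

private noncomputable def Psi0 : R18 k →+* k :=
  Ideal.Quotient.lift (I18 k) (Phi0 (k := k)).toRingHom Phi0_ker

private lemma Psi0_t1 : Psi0 (t1 k) = 0 := by simp [Psi0, t1, Phi0]
private lemma Psi0_t2 : Psi0 (t2 k) = 0 := by simp [Psi0, t2, Phi0]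
private lemma Psi0_alg (c : k) : Psi0 (algebraMap k (R18 k) c) = c := by
  rw [algebraMap_R18]; simp [Psi0, Phi0]

private lemma L18_A_apply (x : R18 k) : (L18 k).A x = t1 k * x := by
  show (t1 k • (1 : Module.End (R18 k) (R18 k))) x = t1 k * x
  simp

private lemma L18_D_apply (x : R18 k) : (L18 k).D x = t2 k * x := by
  show (t2 k • (1 : Module.End (R18 k) (R18 k))) x = t2 k * x
  simp

end Aux

/-- In `R = k[t₁,t₂]/(t₁² − t₂², t₁t₂)` the relations of `Λ₁`
hold, so `L = R` (with `α = t₁`, `δ = t₂`) is an `R ⊗ Λ₁`-module, free over `R`;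
`L/(t₁,t₂)L ≅ S₁`; `L/t₁L ≅ M(δ)` and `L/t₂L ≅ M(α)` as `Λ₁`-modules; and
`M(α)` and `M(δ)` are not isomorphic. -/
theorem L18_properties (k : Type) [Field k] :
    (Satisfies1 (L18 k) ∧ Module.Free (R18 k) (L18 k).V) ∧
    (∃ π : (L18 k).V →+ k, Function.Surjective π ∧
      (∀ x, π x = 0 ↔ ∃ y z, x = t1 k * y + t2 k * z) ∧
      (∀ (c : k) (x : (L18 k).V), π (algebraMap k (R18 k) c * x) = c * π x) ∧
      (∀ x, π ((L18 k).A x) = 0) ∧ (∀ x, π ((L18 k).D x) = 0)) ∧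
    ((∃ π : (L18 k).V →+ (Mdelta k).V, Function.Surjective π ∧
        (∀ x, π x = 0 ↔ ∃ y, x = t1 k * y) ∧
        (∀ (c : k) (x : (L18 k).V), π (algebraMap k (R18 k) c * x) = c • π x) ∧
        (∀ x, π ((L18 k).A x) = (Mdelta k).A (π x)) ∧
        (∀ x, π ((L18 k).D x) = (Mdelta k).D (π x))) ∧
      (∃ π : (L18 k).V →+ (Malpha k).V, Function.Surjective π ∧
        (∀ x, π x = 0 ↔ ∃ y, x = t2 k * y) ∧
        (∀ (c : k) (x : (L18 k).V), π (algebraMap k (R18 k) c * x) = c • π x) ∧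
        (∀ x, π ((L18 k).A x) = (Malpha k).A (π x)) ∧
        (∀ x, π ((L18 k).D x) = (Malpha k).D (π x))) ∧
      ¬ ∃ f ∈ homSet1 (Malpha k) (Mdelta k), Function.Bijective f) := by
  refine ⟨⟨⟨?_, ?_, ?_⟩, inferInstance⟩, ?_, ?_, ?_, ?_⟩
  · -- A * D = 0
    refine LinearMap.ext fun x => ?_
    show (L18 k).A ((L18 k).D x) = (0 : Module.End (R18 k) (R18 k)) x
    rw [L18_A_apply, L18_D_apply, ← mul_assoc, t_mul, zero_mul, LinearMap.zero_apply]
  · -- D * A = 0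
    refine LinearMap.ext fun x => ?_
    show (L18 k).D ((L18 k).A x) = (0 : Module.End (R18 k) (R18 k)) x
    rw [L18_D_apply, L18_A_apply, ← mul_assoc, mul_comm (t2 k), t_mul, zero_mul,
      LinearMap.zero_apply]
  · -- A * A = D * D
    refine LinearMap.ext fun x => ?_
    show (L18 k).A ((L18 k).A x) = (L18 k).D ((L18 k).D x)
    rw [L18_A_apply, L18_A_apply, L18_D_apply, L18_D_apply, ← mul_assoc, ← mul_assoc,
      ← sq, ← sq, t_sq]
  · -- S₁ quotient
    refine ⟨Psi0.toAddMonoidHom, ?_, ?_, ?_, ?_, ?_⟩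
    · intro a
      exact ⟨algebraMap k (R18 k) a, Psi0_alg a⟩
    · intro x
      constructor
      · intro hx
        obtain ⟨p, rfl⟩ := Ideal.Quotient.mk_surjective x
        obtain ⟨q, hq, a, b, rfl⟩ := decomp18 0 1 (by decide) p
        have hq0 : Psi0 (Ideal.Quotient.mk (I18 k) q) = 0 := by
          simp only [Psi0, Ideal.Quotient.lift_mk]
          have h : Ideal.span {(MvPolynomial.X 0 : MvPolynomial (Fin 2) k),
              (MvPolynomial.X 1 : MvPolynomial (Fin 2) k) ^ 2}
              ≤ RingHom.ker (Phi0 (k := k)).toRingHom := by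
            rw [Ideal.span_le]
            rintro y (rfl | rfl) <;> simp [SetLike.mem_coe, RingHom.mem_ker, Phi0]
          exact h hq
        have hsplit : (Ideal.Quotient.mk (I18 k)) (q + MvPolynomial.C a + MvPolynomial.C b *
              MvPolynomial.X 1) = (Ideal.Quotient.mk (I18 k)) q +
              (Ideal.Quotient.mk (I18 k)) (MvPolynomial.C a + MvPolynomial.C b *
              MvPolynomial.X 1) := by
          rw [add_assoc, map_add]
        have hval : Psi0 ((Ideal.Quotient.mk (I18 k)) (q + MvPolynomial.C a +
            MvPolynomial.C b * MvPolynomial.X 1)) = a := by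
          rw [hsplit, map_add, hq0, zero_add]
          simp [Psi0, Phi0]
        have hx' : a = 0 := by rw [← hval]; exact hx
        subst hx' 
        obtain ⟨y, hy⟩ := mk_span_t1 q hq
        refine ⟨y, Ideal.Quotient.mk _ (MvPolynomial.C b), ?_⟩
        rw [map_add, map_add, hy, map_mul, ← t2]
        simp only [map_zero, add_zero]
        ring
      · rintro ⟨y, z, rfl⟩
        show Psi0 _ = 0
        rw [map_add, map_mul, map_mul, Psi0_t1, Psi0_t2, zero_mul, zero_mul, add_zero]
    · intro c x
      show Psi0 _ = c * Psi0 x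
      rw [map_mul, Psi0_alg]
    · intro x
      show Psi0 ((L18 k).A x) = 0
      rw [L18_A_apply, map_mul, Psi0_t1, zero_mul]
    · intro x
      show Psi0 ((L18 k).D x) = 0
      rw [L18_D_apply, map_mul, Psi0_t2, zero_mul]
  · -- L/t₁L ≅ M(δ)
    refine ⟨dnE.comp Psi1.toAddMonoidHom, ?_, ?_, ?_, ?_, ?_⟩
    · rintro ⟨a, b⟩
      refine ⟨Ideal.Quotient.mk (I18 k) (MvPolynomial.C a + MvPolynomial.C b *
        MvPolynomial.X 1), ?_⟩
      show dnE (Psi1 _) = _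
      rw [Psi1_mk_lin, dnE_lin]
    · intro x
      constructor
      · intro hx
        obtain ⟨p, rfl⟩ := Ideal.Quotient.mk_surjective x
        obtain ⟨q, hq, a, b, rfl⟩ := decomp18 0 1 (by decide) p
        have hq0 : Psi1 (Ideal.Quotient.mk (I18 k) q) = 0 := by
          simp only [Psi1, Ideal.Quotient.lift_mk]
          exact Phi1_span_ker q hq
        have hsplit : (Ideal.Quotient.mk (I18 k)) (q + MvPolynomial.C a + MvPolynomial.C b *
              MvPolynomial.X 1) = (Ideal.Quotient.mk (I18 k)) q +
              (Ideal.Quotient.mk (I18 k)) (MvPolynomial.C a + MvPolynomial.C b *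
              MvPolynomial.X 1) := by
          rw [add_assoc, map_add]
        have hval : dnE (Psi1 ((Ideal.Quotient.mk (I18 k)) (q + MvPolynomial.C a +
            MvPolynomial.C b * MvPolynomial.X 1))) = (a, b) := by
          rw [hsplit, map_add, hq0, zero_add, Psi1_mk_lin, dnE_lin]
        have hx' : ((a : k), (b : k)) = 0 := by rw [← hval]; exact hx
        rw [Prod.mk_eq_zero] at hx'
        obtain ⟨rfl, rfl⟩ := hx'
        obtain ⟨y, hy⟩ := mk_span_t1 q hq
        refine ⟨y, ?_⟩
        rw [add_assoc]
        simp only [map_add, hy, map_zero, MvPolynomial.C_0, zero_mul, add_zero]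
      · rintro ⟨y, rfl⟩
        show dnE (Psi1 _) = 0
        rw [map_mul, Psi1_t1, zero_mul, map_zero]
    · intro c x
      show dnE (Psi1 _) = c • dnE (Psi1 x)
      rw [map_mul, Psi1_alg, dnE_inl_mul]
    · intro x
      show dnE (Psi1 ((L18 k).A x)) = (Mdelta k).A ((dnE.comp Psi1.toAddMonoidHom) x)
      rw [L18_A_apply, map_mul, Psi1_t1, zero_mul, map_zero]
      rfl
    · intro x
      show dnE (Psi1 ((L18 k).D x)) = (Mdelta k).D ((dnE.comp Psi1.toAddMonoidHom) x)
      rw [L18_D_apply, map_mul, Psi1_t2, dnE_eps_mul]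
      show _ = sh k k (dnE (Psi1 x))
      simp [sh, dnE_apply]
  · -- L/t₂L ≅ M(α)
    refine ⟨dnE.comp Psi2.toAddMonoidHom, ?_, ?_, ?_, ?_, ?_⟩
    · rintro ⟨a, b⟩
      refine ⟨Ideal.Quotient.mk (I18 k) (MvPolynomial.C a + MvPolynomial.C b *
        MvPolynomial.X 0), ?_⟩
      show dnE (Psi2 _) = _
      rw [Psi2_mk_lin, dnE_lin]
    · intro x
      constructor
      · intro hx
        obtain ⟨p, rfl⟩ := Ideal.Quotient.mk_surjective x
        obtain ⟨q, hq, a, b, rfl⟩ := decomp18 1 0 (by decide) p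
        have hq0 : Psi2 (Ideal.Quotient.mk (I18 k) q) = 0 := by
          simp only [Psi2, Ideal.Quotient.lift_mk]
          exact Phi2_span_ker q hq
        have hsplit : (Ideal.Quotient.mk (I18 k)) (q + MvPolynomial.C a + MvPolynomial.C b *
              MvPolynomial.X 0) = (Ideal.Quotient.mk (I18 k)) q +
              (Ideal.Quotient.mk (I18 k)) (MvPolynomial.C a + MvPolynomial.C b *
              MvPolynomial.X 0) := by
          rw [add_assoc, map_add]
        have hval : dnE (Psi2 ((Ideal.Quotient.mk (I18 k)) (q + MvPolynomial.C a +
            MvPolynomial.C b * MvPolynomial.X 0))) = (a, b) := by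
          rw [hsplit, map_add, hq0, zero_add, Psi2_mk_lin, dnE_lin]
        have hx' : ((a : k), (b : k)) = 0 := by rw [← hval]; exact hx
        rw [Prod.mk_eq_zero] at hx'
        obtain ⟨rfl, rfl⟩ := hx' 
        obtain ⟨y, hy⟩ := mk_span_t2 q hq
        refine ⟨y, ?_⟩
        rw [add_assoc]
        simp only [map_add, hy, map_zero, MvPolynomial.C_0, zero_mul, add_zero]
      · rintro ⟨y, rfl⟩
        show dnE (Psi2 _) = 0
        rw [map_mul, Psi2_t2, zero_mul, map_zero]
    · intro c x
      show dnE (Psi2 _) = c • dnE (Psi2 x)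
      rw [map_mul, Psi2_alg, dnE_inl_mul]
    · intro x
      show dnE (Psi2 ((L18 k).A x)) = (Malpha k).A ((dnE.comp Psi2.toAddMonoidHom) x)
      rw [L18_A_apply, map_mul, Psi2_t1, dnE_eps_mul]
      show _ = sh k k (dnE (Psi2 x))
      simp [sh, dnE_apply]
    · intro x
      show dnE (Psi2 ((L18 k).D x)) = (Malpha k).D ((dnE.comp Psi2.toAddMonoidHom) x)
      rw [L18_D_apply, map_mul, Psi2_t2, zero_mul, map_zero]
      exact (LinearMap.zero_apply _).symm
  · -- M(α) ≇ M(δ)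
    rintro ⟨f, ⟨h1, h2⟩, hbij⟩
    obtain ⟨v, hv⟩ := hbij.2 (1, 0)
    have h3 : sh k k (f v) = 0 := by
      have := congrArg (fun g => g v) h2.symm
      simpa using this
    rw [hv] at h3
    simp [sh, Prod.ext_iff] at h3


end GBTAone
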